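/- Let 0 < a < b, c = k(b-a) + da with k an integer, and let ‖·‖_box denote the spectral box-norm on R^{d×T} (the box-norm applied to the singular values). Then for every matrix W, ‖W‖²_box = min_{Z ∈ R^{d×T}} ( (1/a)‖W-Z‖_F² + (1/(b-a))‖Z‖²_(k) ), where ‖Z‖_(k) is the spectral k-support norm. -/

import Mathlib

open Matrix

noncomputable def thetaNorm {d : ℕ} (Θ : Set (Fin d → ℝ)) (w : Fin d → ℝ) : ℝ :=
  Real.sqrt (⨅ θ : Θ, ∑ i, w i ^ 2 / (θ : Fin d → ℝ) i)

/-- `s` is the (nonincreasing, nonnegative) vector of singular values of `W`,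
witnessed by a singular value decomposition. -/
def IsSVD {d T : ℕ} (W : Matrix (Fin d) (Fin T) ℝ) (s : Fin (min d T) → ℝ) : Prop :=
  Antitone s ∧ (∀ i, 0 ≤ s i) ∧
    ∃ U : Matrix (Fin d) (Fin d) ℝ, U * Uᵀ = 1 ∧
      ∃ V : Matrix (Fin T) (Fin T) ℝ, V * Vᵀ = 1 ∧
        W = U * (Matrix.of fun (i : Fin d) (j : Fin T) =>
          if h : (i : ℕ) = (j : ℕ) ∧ (i : ℕ) < min d T then s ⟨(i : ℕ), h.2⟩ else 0) * Vᵀ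

open Finset

lemma quad_min {a c : ℝ} (s z : ℝ) (ha : 0 < a) (hc : 0 < c) :
    s ^ 2 / (a + c) ≤ (s - z) ^ 2 / a + z ^ 2 / c := by
  rw [div_add_div _ _ (ne_of_gt ha) (ne_of_gt hc),
    div_le_div_iff₀ (by positivity) (by positivity)]
  nlinarith [sq_nonneg (c * (s - z) - a * z)]


lemma tele (s : ℕ → ℝ) (i : ℕ) : ∀ m, i ≤ m →
    ∑ p ∈ Finset.range m, (if i ≤ p then s p - s (p + 1) else 0) = s i - s m := by
  intro m
  induction m with
  | zero => intro h; interval_cases i <;> simp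
  | succ m ih =>
    intro h
    rw [Finset.sum_range_succ]
    by_cases him : i ≤ m
    · rw [ih him, if_pos him]; ring
    · have : i = m + 1 := by omega
      subst this
      rw [if_neg him, Finset.sum_eq_zero fun p hp => by
        rw [if_neg (by simp at hp; omega)]]
      ring

lemma count_le (n p : ℕ) (hp : p < n) :
    ∑ i ∈ Finset.range n, (if i ≤ p then (1:ℝ) else 0) = (p : ℝ) + 1 := by
  rw [← Finset.sum_filter]
  have : Finset.filter (fun i => i ≤ p) (Finset.range n) = Finset.range (p + 1) := by
    ext i; simp; omega
  rw [this]
  simp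

lemma count_le2 (n p q : ℕ) (hp : p < n) (hq : q < n) :
    ∑ i ∈ Finset.range n, (if i ≤ p ∧ i ≤ q then (1:ℝ) else 0)
      = ((min (p + 1) (q + 1) : ℕ) : ℝ) := by
  rw [← Finset.sum_filter]
  have : Finset.filter (fun i => i ≤ p ∧ i ≤ q) (Finset.range n)
      = Finset.range (min (p + 1) (q + 1)) := by
    ext i; simp; omega
  rw [this]
  simp


lemma swap4 (n : ℕ) (f : ℕ → ℕ → ℕ → ℕ → ℝ) :
    ∑ i ∈ Finset.range n, ∑ l ∈ Finset.range n, ∑ p ∈ Finset.range n,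
        ∑ q ∈ Finset.range n, f i l p q
      = ∑ p ∈ Finset.range n, ∑ q ∈ Finset.range n, ∑ i ∈ Finset.range n,
        ∑ l ∈ Finset.range n, f i l p q := by
  have h1 : ∑ i ∈ Finset.range n, ∑ l ∈ Finset.range n, ∑ p ∈ Finset.range n,
        ∑ q ∈ Finset.range n, f i l p q
      = ∑ i ∈ Finset.range n, ∑ p ∈ Finset.range n, ∑ l ∈ Finset.range n,
        ∑ q ∈ Finset.range n, f i l p q :=
    Finset.sum_congr rfl fun i _ => Finset.sum_comm
  have h2 : ∑ i ∈ Finset.range n, ∑ p ∈ Finset.range n, ∑ l ∈ Finset.range n,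
        ∑ q ∈ Finset.range n, f i l p q
      = ∑ p ∈ Finset.range n, ∑ i ∈ Finset.range n, ∑ l ∈ Finset.range n,
        ∑ q ∈ Finset.range n, f i l p q := Finset.sum_comm
  have h3 : ∑ p ∈ Finset.range n, ∑ i ∈ Finset.range n, ∑ l ∈ Finset.range n,
        ∑ q ∈ Finset.range n, f i l p q
      = ∑ p ∈ Finset.range n, ∑ i ∈ Finset.range n, ∑ q ∈ Finset.range n,
        ∑ l ∈ Finset.range n, f i l p q :=
    Finset.sum_congr rfl fun p _ => Finset.sum_congr rfl fun i _ => Finset.sum_comm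
  have h4 : ∑ p ∈ Finset.range n, ∑ i ∈ Finset.range n, ∑ q ∈ Finset.range n,
        ∑ l ∈ Finset.range n, f i l p q
      = ∑ p ∈ Finset.range n, ∑ q ∈ Finset.range n, ∑ i ∈ Finset.range n,
        ∑ l ∈ Finset.range n, f i l p q :=
    Finset.sum_congr rfl fun p _ => Finset.sum_comm
  rw [h1, h2, h3, h4]

lemma vn_core (n : ℕ) (s z : ℕ → ℝ) (hs : ∀ i j, i ≤ j → s j ≤ s i)
    (hz : ∀ i j, i ≤ j → z j ≤ z i) (hsn : s n = 0) (hzn : z n = 0)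
    (C : ℕ → ℕ → ℝ) (hC0 : ∀ i l, 0 ≤ C i l)
    (hrow : ∀ i ∈ Finset.range n, ∑ l ∈ Finset.range n, C i l ≤ 1)
    (hcol : ∀ l ∈ Finset.range n, ∑ i ∈ Finset.range n, C i l ≤ 1) :
    ∑ i ∈ Finset.range n, ∑ l ∈ Finset.range n, s i * z l * C i l
      ≤ ∑ i ∈ Finset.range n, s i * z i := by
  set α : ℕ → ℝ := fun p => s p - s (p + 1) with hα
  set β : ℕ → ℝ := fun q => z q - z (q + 1) with hβ
  have hα0 : ∀ p, 0 ≤ α p := fun p => by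
    simp only [hα, sub_nonneg]; exact hs p (p+1) (Nat.le_succ p)
  have hβ0 : ∀ q, 0 ≤ β q := fun q => by
    simp only [hβ, sub_nonneg]; exact hz q (q+1) (Nat.le_succ q)
  have hsi : ∀ i ∈ Finset.range n, s i = ∑ p ∈ Finset.range n, (if i ≤ p then α p else 0) := by
    intro i hi
    rw [tele s i n (le_of_lt (Finset.mem_range.mp hi)), hsn, sub_zero]
  have hzi : ∀ i ∈ Finset.range n, z i = ∑ q ∈ Finset.range n, (if i ≤ q then β q else 0) := by
    intro i hi
    rw [tele z i n (le_of_lt (Finset.mem_range.mp hi)), hzn, sub_zero]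
  have hL : ∑ i ∈ Finset.range n, ∑ l ∈ Finset.range n, s i * z l * C i l
      = ∑ p ∈ Finset.range n, ∑ q ∈ Finset.range n, ∑ i ∈ Finset.range n,
          ∑ l ∈ Finset.range n,
          (if i ≤ p then α p else 0) * (if l ≤ q then β q else 0) * C i l := by
    rw [← swap4 n]
    refine Finset.sum_congr rfl fun i hi => Finset.sum_congr rfl fun l hl => ?_
    rw [hsi i hi, hzi l hl, Finset.sum_mul_sum, Finset.sum_mul]
    refine Finset.sum_congr rfl fun p _ => ?_
    rw [Finset.sum_mul]
  have hR : ∑ i ∈ Finset.range n, s i * z i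
      = ∑ p ∈ Finset.range n, ∑ q ∈ Finset.range n,
          α p * β q * ((min (p + 1) (q + 1) : ℕ) : ℝ) := by
    have step : ∑ i ∈ Finset.range n, s i * z i
        = ∑ p ∈ Finset.range n, ∑ q ∈ Finset.range n, ∑ i ∈ Finset.range n,
            (if i ≤ p then α p else 0) * (if i ≤ q then β q else 0) := by
      have e1 : ∑ i ∈ Finset.range n, s i * z i
          = ∑ i ∈ Finset.range n, ∑ p ∈ Finset.range n, ∑ q ∈ Finset.range n,
              (if i ≤ p then α p else 0) * (if i ≤ q then β q else 0) := by
        refine Finset.sum_congr rfl fun i hi => ?_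
        rw [hsi i hi, hzi i hi, Finset.sum_mul_sum]
      rw [e1, Finset.sum_comm]
      exact Finset.sum_congr rfl fun p _ => Finset.sum_comm
    rw [step]
    refine Finset.sum_congr rfl fun p hp => Finset.sum_congr rfl fun q hq => ?_
    have e2 : ∀ i, (if i ≤ p then α p else 0) * (if i ≤ q then β q else 0)
        = α p * β q * (if i ≤ p ∧ i ≤ q then (1:ℝ) else 0) := by
      intro i
      by_cases h1 : i ≤ p <;> by_cases h2 : i ≤ q <;> simp [h1, h2]
    simp only [e2]
    rw [← Finset.mul_sum, count_le2 n p q (Finset.mem_range.mp hp) (Finset.mem_range.mp hq)]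
  rw [hL, hR]
  refine Finset.sum_le_sum fun p hp => Finset.sum_le_sum fun q hq => ?_
  have hp' := Finset.mem_range.mp hp
  have hq' := Finset.mem_range.mp hq
  -- bound by rows
  have h1 : ∑ i ∈ Finset.range n, ∑ l ∈ Finset.range n,
      (if i ≤ p then α p else 0) * (if l ≤ q then β q else 0) * C i l
      ≤ α p * β q * ((p : ℝ) + 1) := by
    have inner : ∀ i ∈ Finset.range n,
        ∑ l ∈ Finset.range n, (if i ≤ p then α p else 0) * (if l ≤ q then β q else 0) * C i l
          ≤ (if i ≤ p then α p else 0) * β q := by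
      intro i hi
      have e : ∀ l, (if i ≤ p then α p else 0) * (if l ≤ q then β q else 0) * C i l
          = (if i ≤ p then α p else 0) * ((if l ≤ q then β q else 0) * C i l) := fun l => by ring
      simp only [e]
      rw [← Finset.mul_sum]
      have hnn : (0:ℝ) ≤ (if i ≤ p then α p else 0) := by split <;> simp [hα0]
      refine mul_le_mul_of_nonneg_left ?_ hnn
      calc ∑ l ∈ Finset.range n, (if l ≤ q then β q else 0) * C i l
          ≤ ∑ l ∈ Finset.range n, β q * C i l := by
            refine Finset.sum_le_sum fun l _ => ?_
            have : (0:ℝ) ≤ β q * C i l := mul_nonneg (hβ0 q) (hC0 i l)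
            split <;> simp [this, le_refl]
        _ = β q * ∑ l ∈ Finset.range n, C i l := (Finset.mul_sum _ _ _).symm
        _ ≤ β q * 1 := mul_le_mul_of_nonneg_left (hrow i hi) (hβ0 q)
        _ = β q := mul_one _
    calc ∑ i ∈ Finset.range n, ∑ l ∈ Finset.range n,
        (if i ≤ p then α p else 0) * (if l ≤ q then β q else 0) * C i l
        ≤ ∑ i ∈ Finset.range n, (if i ≤ p then α p else 0) * β q :=
          Finset.sum_le_sum inner
      _ = (∑ i ∈ Finset.range n, (if i ≤ p then α p else 0)) * β q := (Finset.sum_mul _ _ _).symm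
      _ = α p * ((p:ℝ) + 1) * β q := by
          have : ∀ i, (if i ≤ p then α p else 0) = α p * (if i ≤ p then (1:ℝ) else 0) := by
            intro i; split <;> simp
          simp only [this]
          rw [← Finset.mul_sum, count_le n p hp']
      _ = α p * β q * ((p:ℝ) + 1) := by ring
  -- bound by columns
  have h2 : ∑ i ∈ Finset.range n, ∑ l ∈ Finset.range n,
      (if i ≤ p then α p else 0) * (if l ≤ q then β q else 0) * C i l
      ≤ α p * β q * ((q : ℝ) + 1) := by
    rw [Finset.sum_comm]
    have inner : ∀ l ∈ Finset.range n,
        ∑ i ∈ Finset.range n, (if i ≤ p then α p else 0) * (if l ≤ q then β q else 0) * C i l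
          ≤ (if l ≤ q then β q else 0) * α p := by
      intro l hl
      have e : ∀ i, (if i ≤ p then α p else 0) * (if l ≤ q then β q else 0) * C i l
          = (if l ≤ q then β q else 0) * ((if i ≤ p then α p else 0) * C i l) := fun i => by ring
      simp only [e]
      rw [← Finset.mul_sum]
      have hnn : (0:ℝ) ≤ (if l ≤ q then β q else 0) := by split <;> simp [hβ0]
      refine mul_le_mul_of_nonneg_left ?_ hnn
      calc ∑ i ∈ Finset.range n, (if i ≤ p then α p else 0) * C i l
          ≤ ∑ i ∈ Finset.range n, α p * C i l := by
            refine Finset.sum_le_sum fun i _ => ?_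
            have : (0:ℝ) ≤ α p * C i l := mul_nonneg (hα0 p) (hC0 i l)
            split <;> simp [this, le_refl]
        _ = α p * ∑ i ∈ Finset.range n, C i l := (Finset.mul_sum _ _ _).symm
        _ ≤ α p * 1 := mul_le_mul_of_nonneg_left (hcol l hl) (hα0 p)
        _ = α p := mul_one _
    calc ∑ l ∈ Finset.range n, ∑ i ∈ Finset.range n,
        (if i ≤ p then α p else 0) * (if l ≤ q then β q else 0) * C i l
        ≤ ∑ l ∈ Finset.range n, (if l ≤ q then β q else 0) * α p :=
          Finset.sum_le_sum inner
      _ = (∑ l ∈ Finset.range n, (if l ≤ q then β q else 0)) * α p := (Finset.sum_mul _ _ _).symm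
      _ = β q * ((q:ℝ) + 1) * α p := by
          have : ∀ l, (if l ≤ q then β q else 0) = β q * (if l ≤ q then (1:ℝ) else 0) := by
            intro l; split <;> simp
          simp only [this]
          rw [← Finset.mul_sum, count_le n q hq']
      _ = α p * β q * ((q:ℝ) + 1) := by ring
  have hmin : α p * β q * ((min (p + 1) (q + 1) : ℕ) : ℝ)
      = min (α p * β q * ((p:ℝ) + 1)) (α p * β q * ((q:ℝ) + 1)) := by
    have hab : (0:ℝ) ≤ α p * β q := mul_nonneg (hα0 p) (hβ0 q)
    rw [Nat.cast_min]
    push_cast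
    rw [mul_min_of_nonneg _ _ hab]
  rw [hmin]
  exact le_min h1 h2



section MatPart
variable {d T : ℕ}

noncomputable def Emat (s : Fin (min d T) → ℝ) : Matrix (Fin d) (Fin T) ℝ :=
  Matrix.of fun (i : Fin d) (j : Fin T) =>
    if h : (i : ℕ) = (j : ℕ) ∧ (i : ℕ) < min d T then s ⟨(i : ℕ), h.2⟩ else 0

lemma castLE_mk {m n : ℕ} (h : n ≤ m) (j : Fin m) (hj : (j : ℕ) < n) :
    Fin.castLE h ⟨(j : ℕ), hj⟩ = j := rfl

lemma Emat_mul_apply {m : Type*} [Fintype m] (s : Fin (min d T) → ℝ)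
    (P : Matrix (Fin T) m ℝ) (i : Fin d) (j : m) :
    (Emat s * P) i j = if h : (i : ℕ) < min d T then
      s ⟨(i : ℕ), h⟩ * P (Fin.castLE (min_le_right d T) ⟨(i : ℕ), h⟩) j else 0 := by
  rw [Matrix.mul_apply]
  by_cases h : (i : ℕ) < min d T
  · rw [dif_pos h]
    rw [Finset.sum_eq_single (Fin.castLE (min_le_right d T) ⟨(i : ℕ), h⟩)]
    · simp only [Emat, Matrix.of_apply]
      rw [dif_pos ⟨rfl, h⟩]
    · intro m _ hm
      simp only [Emat, Matrix.of_apply]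
      rw [dif_neg, zero_mul]
      rintro ⟨h1, h2⟩
      exact hm (by apply Fin.ext; simpa using h1.symm)
    · intro h'; exact absurd (Finset.mem_univ _) h'
  · rw [dif_neg h]
    refine Finset.sum_eq_zero fun m _ => ?_
    simp only [Emat, Matrix.of_apply]
    rw [dif_neg, zero_mul]
    rintro ⟨h1, h2⟩; exact h h2

lemma EmatT_mul_apply {m : Type*} [Fintype m] (z : Fin (min d T) → ℝ)
    (Q : Matrix (Fin d) m ℝ) (j : Fin T) (i : m) :
    ((Emat z)ᵀ * Q) j i = if h : (j : ℕ) < min d T then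
      z ⟨(j : ℕ), h⟩ * Q (Fin.castLE (min_le_left d T) ⟨(j : ℕ), h⟩) i else 0 := by
  rw [Matrix.mul_apply]
  by_cases h : (j : ℕ) < min d T
  · rw [dif_pos h]
    rw [Finset.sum_eq_single (Fin.castLE (min_le_left d T) ⟨(j : ℕ), h⟩)]
    · simp only [Emat, Matrix.transpose_apply, Matrix.of_apply]
      rw [dif_pos ⟨rfl, h⟩]
      rfl
    · intro m _ hm
      simp only [Emat, Matrix.transpose_apply, Matrix.of_apply]
      rw [dif_neg, zero_mul]
      rintro ⟨h1, h2⟩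
      exact hm (by apply Fin.ext; simpa using h1)
    · intro h'; exact absurd (Finset.mem_univ _) h'
  · rw [dif_neg h]
    refine Finset.sum_eq_zero fun m _ => ?_
    simp only [Emat, Matrix.transpose_apply, Matrix.of_apply]
    rw [dif_neg, zero_mul]
    rintro ⟨h1, h2⟩; exact h (h1 ▸ h2)

lemma sum_dite_lt {n m : ℕ} (hnm : n ≤ m) (g : Fin n → ℝ) :
    ∑ i : Fin m, (if h : (i : ℕ) < n then g ⟨(i : ℕ), h⟩ else 0) = ∑ i : Fin n, g i := by
  rw [Fin.sum_univ_eq_sum_range (fun i => if h : i < n then g ⟨i, h⟩ else 0) m]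
  have h2 : ∑ i : Fin n, g i = ∑ i ∈ Finset.range n, (if h : i < n then g ⟨i, h⟩ else 0) := by
    rw [← Fin.sum_univ_eq_sum_range (fun i => if h : i < n then g ⟨i, h⟩ else 0) n]
    exact Finset.sum_congr rfl fun i _ => by rw [dif_pos i.isLt]
  rw [h2]
  exact (Finset.sum_subset (Finset.range_subset_range.mpr hnm)
    fun x _ hx => dif_neg (by simpa using hx)).symm

lemma trace_EPEQ (s z : Fin (min d T) → ℝ) (P : Matrix (Fin T) (Fin T) ℝ)
    (Q : Matrix (Fin d) (Fin d) ℝ) :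
    Matrix.trace (Emat s * P * (Emat z)ᵀ * Q)
      = ∑ i : Fin (min d T), ∑ j : Fin (min d T),
          s i * z j * (P (Fin.castLE (min_le_right d T) i) (Fin.castLE (min_le_right d T) j)
            * Q (Fin.castLE (min_le_left d T) j) (Fin.castLE (min_le_left d T) i)) := by
  set cT : Fin (min d T) → Fin T := Fin.castLE (min_le_right d T) with hcT
  set cD : Fin (min d T) → Fin d := Fin.castLE (min_le_left d T) with hcD
  have step1 : Matrix.trace (Emat s * P * (Emat z)ᵀ * Q)
      = ∑ i : Fin d, ∑ j : Fin T, (Emat s * P) i j * ((Emat z)ᵀ * Q) j i := by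
    rw [Matrix.mul_assoc, Matrix.trace]
    exact Finset.sum_congr rfl fun i _ => by rw [Matrix.diag_apply, Matrix.mul_apply]
  rw [step1]
  have step2 : ∀ i : Fin d, ∑ j : Fin T, (Emat s * P) i j * ((Emat z)ᵀ * Q) j i
      = if h : (i : ℕ) < min d T then
          (∑ j : Fin T, (Emat s * P) i j * ((Emat z)ᵀ * Q) j i) else 0 := by
    intro i
    by_cases h : (i : ℕ) < min d T
    · rw [dif_pos h]
    · rw [dif_neg h]
      refine Finset.sum_eq_zero fun j _ => ?_
      rw [Emat_mul_apply, dif_neg h, zero_mul]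
  have inner : ∀ (i' : Fin (min d T)), ∑ j : Fin T, (Emat s * P) (cD i') j * ((Emat z)ᵀ * Q) j (cD i')
      = ∑ j' : Fin (min d T), s i' * z j' * (P (cT i') (cT j') * Q (cD j') (cD i')) := by
    intro i'
    have perj : ∀ j : Fin T, (Emat s * P) (cD i') j * ((Emat z)ᵀ * Q) j (cD i')
        = if h : (j : ℕ) < min d T then
            s i' * z ⟨(j : ℕ), h⟩ * (P (cT i') (cT ⟨(j : ℕ), h⟩)
              * Q (cD ⟨(j : ℕ), h⟩) (cD i')) else 0 := by
      intro j
      rw [Emat_mul_apply, EmatT_mul_apply]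
      have hi' : ((cD i' : Fin d) : ℕ) < min d T := i'.isLt
      rw [dif_pos hi']
      by_cases hj : (j : ℕ) < min d T
      · rw [dif_pos hj, dif_pos hj]
        have e1 : (⟨((cD i' : Fin d) : ℕ), hi'⟩ : Fin (min d T)) = i' := Fin.ext rfl
        have e2 : cT ⟨((cD i' : Fin d) : ℕ), hi'⟩ = cT i' := by rw [e1]
        have e3 : Fin.castLE (min_le_right d T) (⟨(j : ℕ), hj⟩ : Fin (min d T)) = j := rfl
        rw [e1]
        ring_nf
        rw [hcT, e3]
        ring
      · rw [dif_neg hj, dif_neg hj, mul_zero]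
    calc ∑ j : Fin T, (Emat s * P) (cD i') j * ((Emat z)ᵀ * Q) j (cD i')
        = ∑ j : Fin T, if h : (j : ℕ) < min d T then
            s i' * z ⟨(j : ℕ), h⟩ * (P (cT i') (cT ⟨(j : ℕ), h⟩)
              * Q (cD ⟨(j : ℕ), h⟩) (cD i')) else 0 := Finset.sum_congr rfl fun j _ => perj j
      _ = ∑ j' : Fin (min d T), s i' * z j' * (P (cT i') (cT j') * Q (cD j') (cD i')) := by
          rw [sum_dite_lt (min_le_right d T)
            (fun j' => s i' * z j' * (P (cT i') (cT j') * Q (cD j') (cD i')))]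
  calc ∑ i : Fin d, ∑ j : Fin T, (Emat s * P) i j * ((Emat z)ᵀ * Q) j i
      = ∑ i : Fin d, if h : (i : ℕ) < min d T then
          (∑ j' : Fin (min d T), s ⟨(i : ℕ), h⟩ * z j'
            * (P (cT ⟨(i : ℕ), h⟩) (cT j') * Q (cD j') (cD ⟨(i : ℕ), h⟩))) else 0 := by
        refine Finset.sum_congr rfl fun i _ => ?_
        rw [step2 i]
        by_cases h : (i : ℕ) < min d T
        · rw [dif_pos h, dif_pos h]
          exact inner ⟨(i : ℕ), h⟩
        · rw [dif_neg h, dif_neg h]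
    _ = ∑ i' : Fin (min d T), ∑ j' : Fin (min d T),
          s i' * z j' * (P (cT i') (cT j') * Q (cD j') (cD i')) :=
        sum_dite_lt (min_le_left d T) (fun i' => ∑ j' : Fin (min d T),
          s i' * z j' * (P (cT i') (cT j') * Q (cD j') (cD i')))

end MatPart

section VN
variable {d T : ℕ}

lemma isSVD_iff (W : Matrix (Fin d) (Fin T) ℝ) (s : Fin (min d T) → ℝ) :
    IsSVD W s ↔ Antitone s ∧ (∀ i, 0 ≤ s i) ∧
    ∃ U : Matrix (Fin d) (Fin d) ℝ, U * Uᵀ = 1 ∧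
      ∃ V : Matrix (Fin T) (Fin T) ℝ, V * Vᵀ = 1 ∧ W = U * Emat s * Vᵀ := Iff.rfl

-- row of an orthogonal matrix, squared, restricted to a sub-block
lemma orth_rowsum {m : ℕ} (P : Matrix (Fin m) (Fin m) ℝ) (hP : P * Pᵀ = 1) (i : Fin m) :
    ∑ j : Fin m, P i j ^ 2 = 1 := by
  have := congrArg (fun M => M i i) hP
  simp only [Matrix.mul_apply, Matrix.transpose_apply, Matrix.one_apply_eq] at this
  simpa [sq] using this

lemma orth_colsum {m : ℕ} (P : Matrix (Fin m) (Fin m) ℝ) (hP : P * Pᵀ = 1) (j : Fin m) :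
    ∑ i : Fin m, P i j ^ 2 = 1 := by
  have hP' : Pᵀ * P = 1 := mul_eq_one_comm.mp hP
  have := congrArg (fun M => M j j) hP'
  simp only [Matrix.mul_apply, Matrix.transpose_apply, Matrix.one_apply_eq] at this
  simpa [sq] using this

lemma sub_sq_sum_le {n m : ℕ} (hnm : n ≤ m) (g : Fin m → ℝ) (hg : ∀ j, 0 ≤ g j) :
    ∑ j : Fin n, g (Fin.castLE hnm j) ≤ ∑ j : Fin m, g j := by
  classical
  have e : ∑ j : Fin n, g (Fin.castLE hnm j)
      = ∑ j ∈ Finset.univ.map (Fin.castLEEmb hnm), g j :=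
    (Finset.sum_map Finset.univ (Fin.castLEEmb hnm) g).symm
  rw [e]
  exact Finset.sum_le_sum_of_subset_of_nonneg (Finset.subset_univ _)
    (fun j _ _ => hg j)

lemma vn_bound {n : ℕ} (s z : Fin n → ℝ) (hs : Antitone s) (hs0 : ∀ i, 0 ≤ s i)
    (hz : Antitone z) (hz0 : ∀ i, 0 ≤ z i) (C : Fin n → Fin n → ℝ)
    (hC0 : ∀ i j, 0 ≤ C i j) (hrow : ∀ i, ∑ j, C i j ≤ 1) (hcol : ∀ j, ∑ i, C i j ≤ 1) :
    ∑ i, ∑ j, s i * z j * C i j ≤ ∑ i, s i * z i := by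
  classical
  set s' : ℕ → ℝ := fun i => if h : i < n then s ⟨i, h⟩ else 0 with hs'
  set z' : ℕ → ℝ := fun i => if h : i < n then z ⟨i, h⟩ else 0 with hz'
  set C' : ℕ → ℕ → ℝ := fun i j =>
    if h : i < n ∧ j < n then C ⟨i, h.1⟩ ⟨j, h.2⟩ else 0 with hC'
  have hsmono : ∀ i j, i ≤ j → s' j ≤ s' i := by
    intro i j hij
    by_cases hj : j < n
    · have hi : i < n := lt_of_le_of_lt hij hj
      simp only [hs', dif_pos hi, dif_pos hj]
      exact hs (by exact hij)
    · simp only [hs', dif_neg hj]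
      by_cases hi : i < n
      · simp only [dif_pos hi]; exact hs0 _
      · simp only [dif_neg hi]; exact le_refl 0
  have hzmono : ∀ i j, i ≤ j → z' j ≤ z' i := by
    intro i j hij
    by_cases hj : j < n
    · have hi : i < n := lt_of_le_of_lt hij hj
      simp only [hz', dif_pos hi, dif_pos hj]
      exact hz (by exact hij)
    · simp only [hz', dif_neg hj]
      by_cases hi : i < n
      · simp only [dif_pos hi]; exact hz0 _
      · simp only [dif_neg hi]; exact le_refl 0
  have hC0' : ∀ i j, 0 ≤ C' i j := by
    intro i j; simp only [hC']
    split
    · exact hC0 _ _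
    · exact le_refl 0
  have inner_eq : ∀ (i : Fin n),
      ∑ j : Fin n, C i j = ∑ j ∈ Finset.range n, C' (i : ℕ) j := by
    intro i
    rw [← Fin.sum_univ_eq_sum_range (fun j => C' (i : ℕ) j) n]
    refine Finset.sum_congr rfl fun j _ => ?_
    simp only [hC', dif_pos (And.intro i.isLt j.isLt)]
  have inner_eqc : ∀ (j : Fin n),
      ∑ i : Fin n, C i j = ∑ i ∈ Finset.range n, C' i (j : ℕ) := by
    intro j
    rw [← Fin.sum_univ_eq_sum_range (fun i => C' i (j : ℕ)) n]
    refine Finset.sum_congr rfl fun i _ => ?_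
    simp only [hC', dif_pos (And.intro i.isLt j.isLt)]
  have hrow' : ∀ i ∈ Finset.range n, ∑ l ∈ Finset.range n, C' i l ≤ 1 := by
    intro i hi
    have hi' := Finset.mem_range.mp hi
    have := hrow ⟨i, hi'⟩
    rw [inner_eq ⟨i, hi'⟩] at this
    exact this
  have hcol' : ∀ l ∈ Finset.range n, ∑ i ∈ Finset.range n, C' i l ≤ 1 := by
    intro l hl
    have hl' := Finset.mem_range.mp hl
    have := hcol ⟨l, hl'⟩
    rw [inner_eqc ⟨l, hl'⟩] at this
    exact this
  have key := vn_core n s' z' hsmono hzmono (by simp [hs']) (by simp [hz'])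
    C' hC0' hrow' hcol'
  have eL : ∑ i : Fin n, ∑ j : Fin n, s i * z j * C i j
      = ∑ i ∈ Finset.range n, ∑ l ∈ Finset.range n, s' i * z' l * C' i l := by
    rw [← Fin.sum_univ_eq_sum_range (fun i => ∑ l ∈ Finset.range n, s' i * z' l * C' i l) n]
    refine Finset.sum_congr rfl fun i _ => ?_
    rw [← Fin.sum_univ_eq_sum_range (fun l => s' (i : ℕ) * z' l * C' (i : ℕ) l) n]
    refine Finset.sum_congr rfl fun j _ => ?_
    simp only [hs', hz', hC', dif_pos i.isLt, dif_pos j.isLt,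
      dif_pos (And.intro i.isLt j.isLt)]
  have eR : ∑ i : Fin n, s i * z i = ∑ i ∈ Finset.range n, s' i * z' i := by
    rw [← Fin.sum_univ_eq_sum_range (fun i => s' i * z' i) n]
    refine Finset.sum_congr rfl fun i _ => ?_
    simp only [hs', hz', dif_pos i.isLt]
  rw [eL, eR]
  exact key

lemma vonNeumann {A B : Matrix (Fin d) (Fin T) ℝ} {s z : Fin (min d T) → ℝ}
    (hA : IsSVD A s) (hB : IsSVD B z) :
    Matrix.trace (A * Bᵀ) ≤ ∑ i, s i * z i := by
  obtain ⟨hsA, hs0, U1, hU1, V1, hV1, hAeq⟩ := hA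
  obtain ⟨hzB, hz0, U2, hU2, V2, hV2, hBeq⟩ := hB
  have hAeq' : A = U1 * Emat s * V1ᵀ := hAeq
  have hBeq' : B = U2 * Emat z * V2ᵀ := hBeq
  set P : Matrix (Fin T) (Fin T) ℝ := V1ᵀ * V2 with hPdef
  set Q : Matrix (Fin d) (Fin d) ℝ := U2ᵀ * U1 with hQdef
  set cT : Fin (min d T) → Fin T := Fin.castLE (min_le_right d T) with hcT
  set cD : Fin (min d T) → Fin d := Fin.castLE (min_le_left d T) with hcD
  have h1 : A * Bᵀ = U1 * (Emat s * P * (Emat z)ᵀ * U2ᵀ) := by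
    rw [hAeq', hBeq']
    simp only [Matrix.transpose_mul, Matrix.transpose_transpose, Matrix.mul_assoc, hPdef]
  have h2 : Matrix.trace (A * Bᵀ) = Matrix.trace (Emat s * P * (Emat z)ᵀ * Q) := by
    rw [h1, Matrix.trace_mul_comm, hQdef, Matrix.mul_assoc]
  have hP : P * Pᵀ = 1 := by
    have : P * Pᵀ = V1ᵀ * (V2 * V2ᵀ) * V1 := by
      simp only [hPdef, Matrix.transpose_mul, Matrix.transpose_transpose, Matrix.mul_assoc]
    rw [this, hV2, Matrix.mul_one, mul_eq_one_comm.mp hV1]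
  have hQ : Q * Qᵀ = 1 := by
    have : Q * Qᵀ = U2ᵀ * (U1 * U1ᵀ) * U2 := by
      simp only [hQdef, Matrix.transpose_mul, Matrix.transpose_transpose, Matrix.mul_assoc]
    rw [this, hU1, Matrix.mul_one, mul_eq_one_comm.mp hU2]
  rw [h2, trace_EPEQ]
  set C : Fin (min d T) → Fin (min d T) → ℝ :=
    fun i j => (P (cT i) (cT j) ^ 2 + Q (cD j) (cD i) ^ 2) / 2 with hCdef
  have hC0 : ∀ i j, 0 ≤ C i j := fun i j => by positivity
  have hrowP : ∀ i : Fin (min d T), ∑ j : Fin (min d T), P (cT i) (cT j) ^ 2 ≤ 1 := by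
    intro i
    calc ∑ j : Fin (min d T), P (cT i) (cT j) ^ 2
        ≤ ∑ j : Fin T, P (cT i) j ^ 2 :=
          sub_sq_sum_le (min_le_right d T) (fun j => P (cT i) j ^ 2) (fun j => sq_nonneg _)
      _ = 1 := orth_rowsum P hP _
  have hcolP : ∀ j : Fin (min d T), ∑ i : Fin (min d T), P (cT i) (cT j) ^ 2 ≤ 1 := by
    intro j
    calc ∑ i : Fin (min d T), P (cT i) (cT j) ^ 2
        ≤ ∑ i : Fin T, P i (cT j) ^ 2 :=
          sub_sq_sum_le (min_le_right d T) (fun i => P i (cT j) ^ 2) (fun i => sq_nonneg _)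
      _ = 1 := orth_colsum P hP _
  have hrowQ : ∀ i : Fin (min d T), ∑ j : Fin (min d T), Q (cD j) (cD i) ^ 2 ≤ 1 := by
    intro i
    calc ∑ j : Fin (min d T), Q (cD j) (cD i) ^ 2
        ≤ ∑ j : Fin d, Q j (cD i) ^ 2 :=
          sub_sq_sum_le (min_le_left d T) (fun j => Q j (cD i) ^ 2) (fun j => sq_nonneg _)
      _ = 1 := orth_colsum Q hQ _
  have hcolQ : ∀ j : Fin (min d T), ∑ i : Fin (min d T), Q (cD j) (cD i) ^ 2 ≤ 1 := by
    intro j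
    calc ∑ i : Fin (min d T), Q (cD j) (cD i) ^ 2
        ≤ ∑ i : Fin d, Q (cD j) i ^ 2 :=
          sub_sq_sum_le (min_le_left d T) (fun i => Q (cD j) i ^ 2) (fun i => sq_nonneg _)
      _ = 1 := orth_rowsum Q hQ _
  have hrow : ∀ i, ∑ j, C i j ≤ 1 := by
    intro i
    have : ∑ j, C i j = (∑ j : Fin (min d T), P (cT i) (cT j) ^ 2
        + ∑ j : Fin (min d T), Q (cD j) (cD i) ^ 2) / 2 := by
      rw [← Finset.sum_add_distrib, ← Finset.sum_div]
    rw [this]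
    linarith [hrowP i, hrowQ i]
  have hcol : ∀ j, ∑ i, C i j ≤ 1 := by
    intro j
    have : ∑ i, C i j = (∑ i : Fin (min d T), P (cT i) (cT j) ^ 2
        + ∑ i : Fin (min d T), Q (cD j) (cD i) ^ 2) / 2 := by
      rw [← Finset.sum_add_distrib, ← Finset.sum_div]
    rw [this]
    linarith [hcolP j, hcolQ j]
  calc ∑ i : Fin (min d T), ∑ j : Fin (min d T),
        s i * z j * (P (cT i) (cT j) * Q (cD j) (cD i))
      ≤ ∑ i, ∑ j, s i * z j * C i j := by
        refine Finset.sum_le_sum fun i _ => Finset.sum_le_sum fun j _ => ?_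
        refine mul_le_mul_of_nonneg_left ?_ (mul_nonneg (hs0 i) (hz0 j))
        have := sq_nonneg (P (cT i) (cT j) - Q (cD j) (cD i))
        simp only [hCdef]
        nlinarith
    _ ≤ ∑ i, s i * z i := vn_bound s z hsA hs0 hzB hz0 C hC0 hrow hcol

lemma trace_self (w : Fin (min d T) → ℝ) (U : Matrix (Fin d) (Fin d) ℝ) (hU : U * Uᵀ = 1)
    (V : Matrix (Fin T) (Fin T) ℝ) (hV : V * Vᵀ = 1) :
    Matrix.trace ((U * Emat w * Vᵀ) * (U * Emat w * Vᵀ)ᵀ) = ∑ i, w i ^ 2 := by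
  set M := U * Emat w * Vᵀ with hM
  have h1 : M * Mᵀ = U * (Emat w * (Vᵀ * V) * (Emat w)ᵀ * Uᵀ) := by
    simp only [hM, Matrix.transpose_mul, Matrix.transpose_transpose, Matrix.mul_assoc]
  have h2 : Matrix.trace (M * Mᵀ)
      = Matrix.trace (Emat w * (Vᵀ * V) * (Emat w)ᵀ * (Uᵀ * U)) := by
    rw [h1, Matrix.trace_mul_comm, Matrix.mul_assoc]
  rw [h2, trace_EPEQ]
  have hV' : Vᵀ * V = 1 := mul_eq_one_comm.mp hV
  have hU' : Uᵀ * U = 1 := mul_eq_one_comm.mp hU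
  rw [hV', hU']
  have key : ∀ i j : Fin (min d T),
      w i * w j * ((1 : Matrix (Fin T) (Fin T) ℝ) (Fin.castLE (min_le_right d T) i)
          (Fin.castLE (min_le_right d T) j)
        * (1 : Matrix (Fin d) (Fin d) ℝ) (Fin.castLE (min_le_left d T) j)
          (Fin.castLE (min_le_left d T) i))
      = if j = i then w i ^ 2 else 0 := by
    intro i j
    by_cases h : j = i
    · subst h; simp [Matrix.one_apply_eq, sq]
    · have h1 : Fin.castLE (min_le_right d T) i ≠ Fin.castLE (min_le_right d T) j :=
        fun hc => h ((Fin.castLE_injective _ hc).symm)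
      rw [Matrix.one_apply_ne h1, zero_mul, mul_zero, if_neg h]
  calc ∑ i : Fin (min d T), ∑ j : Fin (min d T), w i * w j *
        ((1 : Matrix (Fin T) (Fin T) ℝ) (Fin.castLE (min_le_right d T) i)
          (Fin.castLE (min_le_right d T) j)
        * (1 : Matrix (Fin d) (Fin d) ℝ) (Fin.castLE (min_le_left d T) j)
          (Fin.castLE (min_le_left d T) i))
      = ∑ i : Fin (min d T), ∑ j : Fin (min d T), if j = i then w i ^ 2 else 0 :=
        Finset.sum_congr rfl fun i _ => Finset.sum_congr rfl fun j _ => key i j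
    _ = ∑ i, w i ^ 2 := by
        refine Finset.sum_congr rfl fun i _ => ?_
        rw [Finset.sum_ite_eq' Finset.univ i (fun _ => w i ^ 2)]
        simp

lemma isSVD_frob {A : Matrix (Fin d) (Fin T) ℝ} {s : Fin (min d T) → ℝ} (hA : IsSVD A s) :
    Matrix.trace (A * Aᵀ) = ∑ i, s i ^ 2 := by
  obtain ⟨_, _, U, hU, V, hV, hAeq⟩ := hA
  have hAeq' : A = U * Emat s * Vᵀ := hAeq
  rw [hAeq']
  exact trace_self s U hU V hV

lemma svd_unique {A : Matrix (Fin d) (Fin T) ℝ} {s1 s2 : Fin (min d T) → ℝ}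
    (h1 : IsSVD A s1) (h2 : IsSVD A s2) : s1 = s2 := by
  have e1 := isSVD_frob h1
  have e2 := isSVD_frob h2
  have hvn := vonNeumann h1 h2
  have hsum : ∑ i : Fin (min d T), (s1 i - s2 i) ^ 2 ≤ 0 := by
    have expand : ∑ i : Fin (min d T), (s1 i - s2 i) ^ 2
        = ∑ i, s1 i ^ 2 + ∑ i, s2 i ^ 2 - 2 * ∑ i, s1 i * s2 i := by
      rw [← Finset.sum_add_distrib, Finset.mul_sum, ← Finset.sum_sub_distrib]
      exact Finset.sum_congr rfl fun i _ => by ring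
    rw [expand, ← e1, ← e2]
    linarith
  funext i
  have hall := (Finset.sum_eq_zero_iff_of_nonneg
    (fun i _ => sq_nonneg (s1 i - s2 i))).mp
    (le_antisymm hsum (Finset.sum_nonneg fun i _ => sq_nonneg _)) i (Finset.mem_univ i)
  have := sq_eq_zero_iff.mp hall
  linarith

lemma frob_eq (M : Matrix (Fin d) (Fin T) ℝ) :
    Matrix.trace (M * Mᵀ) = ∑ i, ∑ j, M i j ^ 2 := by
  simp only [Matrix.trace, Matrix.diag_apply, Matrix.mul_apply, Matrix.transpose_apply, sq]

lemma Emat_sub (s z : Fin (min d T) → ℝ) :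
    Emat s - Emat z = Emat (fun i => s i - z i) := by
  ext i j
  simp only [Matrix.sub_apply, Emat, Matrix.of_apply]
  by_cases h : (i : ℕ) = (j : ℕ) ∧ (i : ℕ) < min d T
  · rw [dif_pos h, dif_pos h, dif_pos h]
  · rw [dif_neg h, dif_neg h, dif_neg h, sub_zero]

end VN

lemma alg1 (sv t θi ba e : ℝ) (hθ : θi ≠ 0) (ht : t ≠ 0) (hba : ba ≠ 0) (he : e ≠ 0) :
    (sv * (t / θi)) ^ 2 / (e * (t / ba)) = (1 / e) * (sv ^ 2 * t * ba / θi ^ 2) := by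
  field_simp

lemma alg2 (sv ai θi : ℝ) (hθ : θi ≠ 0) (ha' : ai ≠ 0) :
    (1 / ai) * (sv * (ai / θi)) ^ 2 = sv ^ 2 * ai / θi ^ 2 := by
  field_simp

lemma alg3 (sv ai θi ba : ℝ) (hθ : θi ≠ 0) (hba : ba ≠ 0) :
    sv ^ 2 * ai / θi ^ 2 + (1 / ba) * (sv ^ 2 * (θi - ai) * ba / θi ^ 2) = sv ^ 2 / θi := by
  field_simp
  ring

section Vec
variable {n kk : ℕ} {a b : ℝ}

/-- The spectral box constraint set. -/
def boxSet (n : ℕ) (a b c : ℝ) : Set (Fin n → ℝ) :=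
  {θ : Fin n → ℝ | (∀ i, a ≤ θ i ∧ θ i ≤ b) ∧ ∑ i, θ i ≤ c}

/-- The k-support constraint set. -/
def kSet (n : ℕ) (k : ℝ) : Set (Fin n → ℝ) :=
  {θ : Fin n → ℝ | (∀ i, 0 < θ i ∧ θ i ≤ 1) ∧ ∑ i, θ i ≤ k}

lemma boxSet_nonempty (hk0 : (0:ℝ) ≤ (kk:ℝ)) (ha : 0 < a) (hab : a < b) :
    ((fun _ => a : Fin n → ℝ)) ∈ boxSet n a b ((kk:ℝ) * (b - a) + n * a) := by
  constructor
  · intro i; exact ⟨le_refl a, hab.le⟩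
  · rw [Finset.sum_const, Finset.card_univ, Fintype.card_fin]
    have : (0:ℝ) ≤ (kk:ℝ) * (b - a) := by nlinarith
    simp only [nsmul_eq_mul]
    linarith

lemma kSet_nonempty (hk1 : 1 ≤ kk) (hkn : kk ≤ n) :
    ((fun _ => (kk:ℝ) / (n + 1) : Fin n → ℝ)) ∈ kSet n (kk:ℝ) := by
  have hk0 : (0:ℝ) < (kk:ℝ) := by exact_mod_cast hk1
  have hn1 : (0:ℝ) < (n:ℝ) + 1 := by positivity
  have hkn' : (kk:ℝ) ≤ (n:ℝ) := by exact_mod_cast hkn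
  constructor
  · intro i
    constructor
    · positivity
    · rw [div_le_one hn1]; linarith
  · rw [Finset.sum_const, Finset.card_univ, Fintype.card_fin, nsmul_eq_mul]
    rw [mul_div_assoc'] at *
    rw [div_le_iff₀ hn1]
    nlinarith

lemma bddBelow_box (ha : 0 < a) {c : ℝ} (s : Fin n → ℝ) :
    BddBelow (Set.range fun θ : (boxSet n a b c) => ∑ i, s i ^ 2 / (θ : Fin n → ℝ) i) := by
  refine ⟨0, ?_⟩
  rintro x ⟨θ, rfl⟩
  exact Finset.sum_nonneg fun i _ =>
    div_nonneg (sq_nonneg _) (le_trans ha.le (θ.2.1 i).1)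

lemma bddBelow_k {c : ℝ} (s : Fin n → ℝ) :
    BddBelow (Set.range fun θ : (kSet n c) => ∑ i, s i ^ 2 / (θ : Fin n → ℝ) i) := by
  refine ⟨0, ?_⟩
  rintro x ⟨θ, rfl⟩
  exact Finset.sum_nonneg fun i _ => div_nonneg (sq_nonneg _) (θ.2.1 i).1.le

lemma vec_lower (hk1 : 1 ≤ kk) (hkn : kk ≤ n) (ha : 0 < a) (hab : a < b)
    (s z : Fin n → ℝ) :
    (⨅ θ : (boxSet n a b ((kk:ℝ) * (b - a) + n * a)),
        ∑ i, s i ^ 2 / (θ : Fin n → ℝ) i)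
      ≤ (1 / a) * ∑ i, (s i - z i) ^ 2
        + (1 / (b - a)) * ⨅ φ : (kSet n (kk:ℝ)), ∑ i, z i ^ 2 / (φ : Fin n → ℝ) i := by
  have hba : (0:ℝ) < b - a := by linarith
  have hk0 : (0:ℝ) ≤ (kk:ℝ) := Nat.cast_nonneg kk
  haveI hKne : Nonempty (kSet n (kk:ℝ)) := ⟨⟨_, kSet_nonempty hk1 hkn⟩⟩
  set A := (1 / a) * ∑ i, (s i - z i) ^ 2 with hA
  set c := 1 / (b - a) with hc
  have hcpos : 0 < c := by rw [hc]; positivity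
  set B := ⨅ θ : (boxSet n a b ((kk:ℝ) * (b - a) + n * a)),
      ∑ i, s i ^ 2 / (θ : Fin n → ℝ) i with hB
  have per_phi : ∀ φ : (kSet n (kk:ℝ)),
      B ≤ A + c * ∑ i, z i ^ 2 / (φ : Fin n → ℝ) i := by
    intro φ
    obtain ⟨φv, hφmem⟩ := φ
    set θ : Fin n → ℝ := fun i => a + (b - a) * φv i with hθdef
    have hθmem : θ ∈ boxSet n a b ((kk:ℝ) * (b - a) + n * a) := by
      constructor
      · intro i
        have h1 := (hφmem.1 i).1
        have h2 := (hφmem.1 i).2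
        constructor
        · have : 0 ≤ (b - a) * φv i := mul_nonneg hba.le h1.le
          simp only [hθdef]; linarith
        · simp only [hθdef]; nlinarith
      · have : ∑ i, θ i = n * a + (b - a) * ∑ i, φv i := by
          simp only [hθdef]
          rw [Finset.sum_add_distrib, Finset.sum_const, Finset.card_univ, Fintype.card_fin,
            nsmul_eq_mul, ← Finset.mul_sum]
        rw [this]
        have := hφmem.2
        nlinarith
    have hstep1 : B ≤ ∑ i, s i ^ 2 / θ i :=
      ciInf_le (bddBelow_box ha s) ⟨θ, hθmem⟩
    have hstep2 : ∑ i, s i ^ 2 / θ i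
        ≤ ∑ i, ((s i - z i) ^ 2 / a + z i ^ 2 / ((b - a) * φv i)) := by
      refine Finset.sum_le_sum fun i _ => ?_
      exact quad_min (s i) (z i) ha (mul_pos hba (hφmem.1 i).1)
    have hstep3 : ∑ i, ((s i - z i) ^ 2 / a + z i ^ 2 / ((b - a) * φv i))
        = A + c * ∑ i, z i ^ 2 / φv i := by
      rw [Finset.sum_add_distrib, hA, hc]
      congr 1
      · rw [Finset.mul_sum]
        exact Finset.sum_congr rfl fun i _ => (one_div_mul_eq_div a _).symm
      · rw [Finset.mul_sum]
        refine Finset.sum_congr rfl fun i _ => ?_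
        rw [div_mul_div_comm, one_mul]
    calc B ≤ ∑ i, s i ^ 2 / θ i := hstep1
      _ ≤ _ := hstep2
      _ = _ := hstep3
  have hdiv : ∀ φ : (kSet n (kk:ℝ)),
      (B - A) / c ≤ ∑ i, z i ^ 2 / (φ : Fin n → ℝ) i := by
    intro φ
    rw [div_le_iff₀ hcpos]
    have := per_phi φ
    linarith [mul_comm c (∑ i, z i ^ 2 / (φ : Fin n → ℝ) i)]
  have hK := le_ciInf hdiv
  rw [div_le_iff₀ hcpos] at hK
  have := mul_comm (⨅ φ : (kSet n (kk:ℝ)), ∑ i, z i ^ 2 / (φ : Fin n → ℝ) i) c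
  linarith

set_option maxHeartbeats 2000000 in
lemma vec_mem (hk1 : 1 ≤ kk) (hkn : kk ≤ n) (ha : 0 < a) (hab : a < b)
    (s : Fin n → ℝ) (hs : Antitone s) (hs0 : ∀ i, 0 ≤ s i) :
    ∃ zv : Fin n → ℝ, Antitone zv ∧ (∀ i, 0 ≤ zv i) ∧
      (1 / a) * ∑ i, (s i - zv i) ^ 2
          + (1 / (b - a)) * ⨅ φ : (kSet n (kk:ℝ)), ∑ i, zv i ^ 2 / (φ : Fin n → ℝ) i
        ≤ ⨅ θ : (boxSet n a b ((kk:ℝ) * (b - a) + n * a)),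
            ∑ i, s i ^ 2 / (θ : Fin n → ℝ) i := by
  classical
  have hba : (0:ℝ) < b - a := by linarith
  have hk0 : (0:ℝ) ≤ (kk:ℝ) := Nat.cast_nonneg kk
  set c0 : ℝ := (kk:ℝ) * (b - a) + n * a with hc0
  set SB : Set (Fin n → ℝ) := boxSet n a b c0 with hSB
  set f : (Fin n → ℝ) → ℝ := fun θ => ∑ i, s i ^ 2 / θ i with hf
  -- compactness and attainment
  have hne : SB.Nonempty := ⟨fun _ => a, boxSet_nonempty hk0 ha hab⟩
  have hsubset : SB ⊆ Set.Icc (fun _ => a) (fun _ => b) := by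
    rintro θ ⟨h1, _⟩
    exact ⟨fun i => (h1 i).1, fun i => (h1 i).2⟩
  have hclosed : IsClosed SB := by
    have : SB = Set.Icc (fun _ => a) (fun _ => b) ∩ {θ : Fin n → ℝ | ∑ i, θ i ≤ c0} := by
      ext θ
      simp only [hSB, boxSet, Set.mem_setOf_eq, Set.mem_inter_iff, Set.mem_Icc,
        Pi.le_def, forall_and]
    rw [this]
    exact isClosed_Icc.inter
      (isClosed_le (continuous_finset_sum _ fun i _ => continuous_apply i) continuous_const)
  have hcomp : IsCompact SB := isCompact_Icc.of_isClosed_subset hclosed hsubset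
  have hcont : ContinuousOn f SB := by
    apply continuousOn_finset_sum
    intro i _
    exact ContinuousOn.div continuousOn_const (continuous_apply i).continuousOn
      fun θ hθ => ne_of_gt (lt_of_lt_of_le ha (hθ.1 i).1)
  obtain ⟨θ0, hθ0mem, hθ0min⟩ := hcomp.exists_isMinOn hne hcont
  have hθ0min' : ∀ θ ∈ SB, f θ0 ≤ f θ := fun θ hθ => hθ0min hθ
  -- sort θ0 decreasingly
  set τ : Equiv.Perm (Fin n) := Tuple.sort (fun i => -θ0 i) with hτ
  have hmono : Monotone ((fun i => -θ0 i) ∘ τ) := Tuple.monotone_sort _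
  set θ1 : Fin n → ℝ := fun i => θ0 (τ i) with hθ1
  have hθ1anti : Antitone θ1 := by
    intro i j hij
    have := hmono hij
    simp only [Function.comp_apply] at this
    simp only [hθ1]; linarith
  have hθ1mem : θ1 ∈ SB := by
    obtain ⟨h1, h2⟩ := hθ0mem
    refine ⟨fun i => h1 (τ i), ?_⟩
    rw [show ∑ i, θ1 i = ∑ i, θ0 i from Equiv.sum_comp τ θ0]
    exact h2
  have hθ1pos : ∀ i, 0 < θ1 i := fun i => lt_of_lt_of_le ha (hθ1mem.1 i).1
  have hθ1a : ∀ i, a ≤ θ1 i := fun i => (hθ1mem.1 i).1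
  have hθ1b : ∀ i, θ1 i ≤ b := fun i => (hθ1mem.1 i).2
  -- rearrangement: f θ1 ≤ f θ0
  have hfθ1 : f θ1 ≤ f θ0 := by
    have hg : Antitone (fun i => s i ^ 2) := fun i j hij =>
      pow_le_pow_left₀ (hs0 j) (hs hij) 2
    set u : Fin n → ℝ := fun i => (θ0 i)⁻¹ with hu
    have humono : Monotone (u ∘ τ) := by
      intro i j hij
      have h1 : θ1 j ≤ θ1 i := hθ1anti hij
      have h2 : 0 < θ1 j := hθ1pos j
      simp only [Function.comp_apply, hu]
      exact inv_anti₀ h2 h1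
    have hant : Antivary (fun i => s i ^ 2) (u ∘ τ) := by
      intro i j hlt
      by_cases hij : i ≤ j
      · exact hg hij
      · exact absurd (humono (le_of_not_ge hij)) (not_le.mpr hlt)
    have key := hant.sum_mul_le_sum_mul_comp_perm (σ := τ⁻¹)
    have e1 : ∑ i, s i ^ 2 * (u ∘ τ) i = f θ1 := by
      refine Finset.sum_congr rfl fun i _ => ?_
      simp only [Function.comp_apply, hu, hθ1, div_eq_mul_inv]
    have e2 : ∑ i, s i ^ 2 * (u ∘ τ) (τ⁻¹ i) = f θ0 := by
      refine Finset.sum_congr rfl fun i _ => ?_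
      simp only [Function.comp_apply, Equiv.Perm.coe_inv, Equiv.apply_symm_apply, hu, div_eq_mul_inv]
    rw [e1, e2] at key
    exact key
  have hθ1min : ∀ θ ∈ SB, f θ1 ≤ f θ := fun θ hθ => le_trans hfθ1 (hθ0min' θ hθ)
  -- the candidate z
  set zv : Fin n → ℝ := fun i => s i * (1 - a / θ1 i) with hzv
  have hfrac01 : ∀ i, 0 ≤ 1 - a / θ1 i ∧ 1 - a / θ1 i ≤ 1 := by
    intro i
    constructor
    · have : a / θ1 i ≤ 1 := (div_le_one (hθ1pos i)).mpr (hθ1a i)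
      linarith
    · have : 0 ≤ a / θ1 i := div_nonneg ha.le (hθ1pos i).le
      linarith
  have hzv0 : ∀ i, 0 ≤ zv i := fun i => mul_nonneg (hs0 i) (hfrac01 i).1
  have hzvanti : Antitone zv := by
    intro i j hij
    have h1 : s j ≤ s i := hs hij
    have h2 : 1 - a / θ1 j ≤ 1 - a / θ1 i := by
      have h3 : θ1 j ≤ θ1 i := hθ1anti hij
      have h4 : a / θ1 i ≤ a / θ1 j :=
        div_le_div_of_nonneg_left ha.le (hθ1pos j) h3
      linarith
    exact mul_le_mul h1 h2 (hfrac01 j).1 (hs0 i)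
  refine ⟨zv, hzvanti, hzv0, ?_⟩
  -- value bound
  set L : ℝ := ∑ i, s i ^ 2 * (θ1 i - a) * (b - a) / θ1 i ^ 2 with hL
  have hL0 : 0 ≤ L := Finset.sum_nonneg fun i _ => by
    have h1 := hθ1a i
    have hnum : 0 ≤ s i ^ 2 * (θ1 i - a) * (b - a) :=
      mul_nonneg (mul_nonneg (sq_nonneg _) (by linarith)) hba.le
    exact div_nonneg hnum (sq_nonneg _)
  -- kSq ≤ L
  set K : ℝ := ⨅ φ : (kSet n (kk:ℝ)), ∑ i, zv i ^ 2 / (φ : Fin n → ℝ) i with hK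
  have hKle : ∀ ε : ℝ, 0 < ε → ε < 1 → K ≤ (1 / (1 - ε)) * L := by
    intro ε hε0 hε1
    have h1ε : 0 < 1 - ε := by linarith
    have hn1 : (0:ℝ) < (n:ℝ) + 1 := by positivity
    have hkpos : (0:ℝ) < (kk:ℝ) := by exact_mod_cast hk1
    have hknR : (kk:ℝ) ≤ (n:ℝ) := by exact_mod_cast hkn
    set φε : Fin n → ℝ :=
      fun i => (1 - ε) * ((θ1 i - a) / (b - a)) + ε * ((kk:ℝ) / (n + 1)) with hφε
    have hx01 : ∀ i, 0 ≤ (θ1 i - a) / (b - a) ∧ (θ1 i - a) / (b - a) ≤ 1 := by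
      intro i
      constructor
      · exact div_nonneg (by linarith [hθ1a i]) hba.le
      · rw [div_le_one hba]; linarith [hθ1b i]
    have hφεmem : φε ∈ kSet n (kk:ℝ) := by
      constructor
      · intro i
        have hx := hx01 i
        have hy0 : 0 < (kk:ℝ) / (n + 1) := by positivity
        have hy1 : (kk:ℝ) / (n + 1) ≤ 1 := by rw [div_le_one hn1]; linarith
        constructor
        · have : 0 ≤ (1 - ε) * ((θ1 i - a) / (b - a)) := mul_nonneg h1ε.le hx.1
          have : 0 < ε * ((kk:ℝ) / (n + 1)) := mul_pos hε0 hy0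
          simp only [hφε]; nlinarith [mul_nonneg h1ε.le (hx01 i).1]
        · simp only [hφε]; nlinarith [mul_le_mul_of_nonneg_left hx.2 h1ε.le,
            mul_le_mul_of_nonneg_left hy1 hε0.le]
      · have hsum1 : ∑ i, (θ1 i - a) / (b - a) ≤ (kk:ℝ) := by
          rw [← Finset.sum_div, div_le_iff₀ hba]
          have h2 := hθ1mem.2
          rw [Finset.sum_sub_distrib, Finset.sum_const, Finset.card_univ,
            Fintype.card_fin, nsmul_eq_mul]
          rw [hc0] at h2
          linarith
        have : ∑ i, φε i = (1 - ε) * (∑ i, (θ1 i - a) / (b - a))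
            + (n:ℝ) * (ε * ((kk:ℝ) / (n + 1))) := by
          simp only [hφε]
          rw [Finset.sum_add_distrib, ← Finset.mul_sum, Finset.sum_const,
            Finset.card_univ, Fintype.card_fin, nsmul_eq_mul]
        rw [this]
        have h9 : (n:ℝ) * ((kk:ℝ) / (n + 1)) ≤ (kk:ℝ) := by
          rw [mul_div_assoc', div_le_iff₀ hn1]
          nlinarith
        have hterm2 : (n:ℝ) * (ε * ((kk:ℝ) / (n + 1))) ≤ ε * (kk:ℝ) := by
          calc (n:ℝ) * (ε * ((kk:ℝ) / (n + 1))) = ε * ((n:ℝ) * ((kk:ℝ) / (n + 1))) := by ring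
            _ ≤ ε * (kk:ℝ) := mul_le_mul_of_nonneg_left h9 hε0.le
        have hterm1 : (1 - ε) * (∑ i, (θ1 i - a) / (b - a)) ≤ (1 - ε) * (kk:ℝ) :=
          mul_le_mul_of_nonneg_left hsum1 h1ε.le
        nlinarith
    have hφεterm : ∀ i, zv i ^ 2 / φε i
        ≤ (1 / (1 - ε)) * (s i ^ 2 * (θ1 i - a) * (b - a) / θ1 i ^ 2) := by
      intro i
      by_cases hia : θ1 i = a
      · have hz0 : zv i = 0 := by
          simp only [hzv, hia, div_self (ne_of_gt ha)]
          ring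
        rw [hz0]
        have : (0:ℝ)^2 / φε i = 0 := by
          rw [zero_pow (by norm_num), zero_div]
        rw [this]
        have : s i ^ 2 * (θ1 i - a) * (b - a) / θ1 i ^ 2 = 0 := by
          rw [hia, sub_self, mul_zero, zero_mul, zero_div]
        rw [this, mul_zero]
      · have hgt : a < θ1 i := lt_of_le_of_ne (hθ1a i) (Ne.symm hia)
        have hxpos : 0 < (θ1 i - a) / (b - a) := div_pos (by linarith) hba
        have hden : (1 - ε) * ((θ1 i - a) / (b - a)) ≤ φε i := by
          have : 0 ≤ ε * ((kk:ℝ) / (n + 1)) := by positivity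
          simp only [hφε]; linarith
        have hdenpos : 0 < (1 - ε) * ((θ1 i - a) / (b - a)) := mul_pos h1ε hxpos
        have h1 : zv i ^ 2 / φε i ≤ zv i ^ 2 / ((1 - ε) * ((θ1 i - a) / (b - a))) :=
          div_le_div_of_nonneg_left (sq_nonneg _) hdenpos hden
        refine le_trans h1 (le_of_eq ?_)
        have hθne : θ1 i ≠ 0 := ne_of_gt (hθ1pos i)
        have hbane : b - a ≠ 0 := ne_of_gt hba
        have h1εne : (1:ℝ) - ε ≠ 0 := ne_of_gt h1ε
        have hθane : θ1 i - a ≠ 0 := sub_ne_zero.mpr hia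
        have hzvi : zv i = s i * ((θ1 i - a) / θ1 i) := by
          simp only [hzv]
          rw [sub_div, div_self hθne]
        rw [hzvi]
        exact alg1 (s i) (θ1 i - a) (θ1 i) (b - a) (1 - ε) hθne hθane hbane h1εne
    have hsumφ : ∑ i, zv i ^ 2 / φε i ≤ (1 / (1 - ε)) * L := by
      rw [hL, Finset.mul_sum]
      exact Finset.sum_le_sum fun i _ => hφεterm i
    exact le_trans (ciInf_le (bddBelow_k zv) ⟨φε, hφεmem⟩) hsumφ
  have hKL : K ≤ L := by
    by_contra hgt
    push_neg at hgt
    have h2 : K ≤ 2 * L := by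
      have := hKle (1/2) (by norm_num) (by norm_num)
      norm_num at this
      linarith
    have hLpos : 0 < L := by
      rcases lt_or_ge 0 L with h | h
      · exact h
      · exfalso; linarith
    have hKpos : 0 < K := lt_trans hLpos hgt
    obtain ⟨ε, hε⟩ : ∃ ε : ℝ, ε = (K - L) / (2 * K) := ⟨_, rfl⟩
    have hε0 : 0 < ε := by
      rw [hε]
      apply div_pos
      · linarith
      · linarith
    have hε1 : ε < 1 := by
      rw [hε, div_lt_one (by linarith)]
      linarith
    have := hKle ε hε0 hε1
    have h1ε : 0 < 1 - ε := by linarith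
    rw [div_mul_eq_mul_div, one_mul, le_div_iff₀ h1ε] at this
    have hεK : ε * K = (K - L) / 2 := by
      rw [hε]
      field_simp
    have hexp : K * (1 - ε) = K - ε * K := by ring
    rw [hexp] at this
    linarith
  -- final assembly
  have hsz : ∀ i, s i - zv i = s i * (a / θ1 i) := by
    intro i
    simp only [hzv]
    ring
  have hsum1 : (1 / a) * ∑ i, (s i - zv i) ^ 2
      = ∑ i, s i ^ 2 * a / θ1 i ^ 2 := by
    rw [Finset.mul_sum]
    refine Finset.sum_congr rfl fun i _ => ?_
    rw [hsz i]
    exact alg2 (s i) a (θ1 i) (ne_of_gt (hθ1pos i)) (ne_of_gt ha)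
  have hfinal : ∑ i, s i ^ 2 * a / θ1 i ^ 2 + (1 / (b - a)) * L = f θ1 := by
    rw [hL, Finset.mul_sum, ← Finset.sum_add_distrib]
    refine Finset.sum_congr rfl fun i _ => ?_
    exact alg3 (s i) a (θ1 i) (b - a) (ne_of_gt (hθ1pos i)) (ne_of_gt hba)
  calc (1 / a) * ∑ i, (s i - zv i) ^ 2 + (1 / (b - a)) * K
      ≤ (1 / a) * ∑ i, (s i - zv i) ^ 2 + (1 / (b - a)) * L := by
        have h0 : 0 ≤ 1 / (b - a) := by positivity
        have := mul_le_mul_of_nonneg_left hKL h0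
        linarith
    _ = f θ1 := by rw [hsum1]; exact hfinal
    _ ≤ ⨅ θ : (boxSet n a b ((kk:ℝ) * (b - a) + n * a)),
          ∑ i, s i ^ 2 / (θ : Fin n → ℝ) i := by
        haveI : Nonempty (boxSet n a b ((kk:ℝ) * (b - a) + n * a)) :=
          ⟨⟨fun _ => a, boxSet_nonempty hk0 ha hab⟩⟩
        exact le_ciInf fun θ => hθ1min θ.1 θ.2

end Vec

set_option maxHeartbeats 2000000 in
theorem spectral_box_moreau_of_spectral_ksup {d T k : ℕ} (hk1 : 1 ≤ k)
    (hk : k ≤ min d T) (a b : ℝ) (ha : 0 < a) (hab : a < b)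
    (σfun : Matrix (Fin d) (Fin T) ℝ → (Fin (min d T) → ℝ))
    (hσ : ∀ W, IsSVD W (σfun W)) (W : Matrix (Fin d) (Fin T) ℝ) :
    IsLeast {x : ℝ | ∃ Z : Matrix (Fin d) (Fin T) ℝ,
        x = (1 / a) * ∑ i, ∑ j, (W i j - Z i j) ^ 2 +
          (1 / (b - a)) *
            (thetaNorm {θ : Fin (min d T) → ℝ |
              (∀ i, 0 < θ i ∧ θ i ≤ 1) ∧ ∑ i, θ i ≤ (k : ℝ)} (σfun Z)) ^ 2}
      ((thetaNorm {θ : Fin (min d T) → ℝ | (∀ i, a ≤ θ i ∧ θ i ≤ b) ∧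
          ∑ i, θ i ≤ (k : ℝ) * (b - a) + (min d T : ℕ) * a} (σfun W)) ^ 2) := by
  have hba : (0:ℝ) < b - a := by linarith
  obtain ⟨hsAnti, hs0, U, hU, V, hV, hWeq⟩ := hσ W
  have hWeq' : W = U * Emat (σfun W) * Vᵀ := hWeq
  set s : Fin (min d T) → ℝ := σfun W with hsdef
  -- rewrite the theta norms as infima
  have hbox_nonneg : 0 ≤ ⨅ θ : (boxSet (min d T) a b ((k:ℝ) * (b - a) + (min d T) * a)),
      ∑ i, s i ^ 2 / (θ : Fin (min d T) → ℝ) i :=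
    Real.iInf_nonneg fun θ => Finset.sum_nonneg fun i _ =>
      div_nonneg (sq_nonneg _) (le_trans ha.le (θ.2.1 i).1)
  have hknneg : ∀ w : Fin (min d T) → ℝ, 0 ≤ ⨅ φ : (kSet (min d T) (k:ℝ)),
      ∑ i, w i ^ 2 / (φ : Fin (min d T) → ℝ) i := fun w =>
    Real.iInf_nonneg fun φ => Finset.sum_nonneg fun i _ =>
      div_nonneg (sq_nonneg _) (φ.2.1 i).1.le
  have hboxsq : (thetaNorm {θ : Fin (min d T) → ℝ | (∀ i, a ≤ θ i ∧ θ i ≤ b) ∧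
          ∑ i, θ i ≤ (k : ℝ) * (b - a) + (min d T : ℕ) * a} s) ^ 2
      = ⨅ θ : (boxSet (min d T) a b ((k:ℝ) * (b - a) + (min d T) * a)),
          ∑ i, s i ^ 2 / (θ : Fin (min d T) → ℝ) i :=
    Real.sq_sqrt hbox_nonneg
  have hksq : ∀ w : Fin (min d T) → ℝ,
      (thetaNorm {θ : Fin (min d T) → ℝ |
          (∀ i, 0 < θ i ∧ θ i ≤ 1) ∧ ∑ i, θ i ≤ (k : ℝ)} w) ^ 2
        = ⨅ φ : (kSet (min d T) (k:ℝ)), ∑ i, w i ^ 2 / (φ : Fin (min d T) → ℝ) i :=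
    fun w => Real.sq_sqrt (hknneg w)
  -- the general lower bound, for any Z
  have lower : ∀ Z : Matrix (Fin d) (Fin T) ℝ,
      (⨅ θ : (boxSet (min d T) a b ((k:ℝ) * (b - a) + (min d T) * a)),
          ∑ i, s i ^ 2 / (θ : Fin (min d T) → ℝ) i)
      ≤ (1 / a) * ∑ i, ∑ j, (W i j - Z i j) ^ 2
        + (1 / (b - a)) * ⨅ φ : (kSet (min d T) (k:ℝ)),
            ∑ i, (σfun Z) i ^ 2 / (φ : Fin (min d T) → ℝ) i := by
    intro Z
    set z : Fin (min d T) → ℝ := σfun Z with hzdef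
    have hfro : ∑ i, (s i - z i) ^ 2 ≤ ∑ i, ∑ j, (W i j - Z i j) ^ 2 := by
      have hexp : (W - Z) * (W - Z)ᵀ = W * Wᵀ - W * Zᵀ - (Z * Wᵀ - Z * Zᵀ) := by
        rw [Matrix.transpose_sub, Matrix.sub_mul, Matrix.mul_sub, Matrix.mul_sub]
      have htr : Matrix.trace ((W - Z) * (W - Z)ᵀ)
          = Matrix.trace (W * Wᵀ) - 2 * Matrix.trace (W * Zᵀ)
            + Matrix.trace (Z * Zᵀ) := by
        rw [hexp, Matrix.trace_sub, Matrix.trace_sub, Matrix.trace_sub]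
        have : Matrix.trace (Z * Wᵀ) = Matrix.trace (W * Zᵀ) := by
          rw [← Matrix.trace_transpose (Z * Wᵀ), Matrix.transpose_mul,
            Matrix.transpose_transpose]
        rw [this]
        ring
      have hWf := isSVD_frob (hσ W)
      have hZf := isSVD_frob (hσ Z)
      have hVN := vonNeumann (hσ W) (hσ Z)
      have hfe : ∑ i, ∑ j, (W i j - Z i j) ^ 2 = Matrix.trace ((W - Z) * (W - Z)ᵀ) := by
        rw [frob_eq]
        exact Finset.sum_congr rfl fun i _ => Finset.sum_congr rfl fun j _ => by
          rw [Matrix.sub_apply]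
      have hexpand : ∑ i, (s i - z i) ^ 2
          = ∑ i, s i ^ 2 - 2 * ∑ i, s i * z i + ∑ i, z i ^ 2 := by
        have e : ∀ i, (s i - z i) ^ 2 = s i ^ 2 - 2 * (s i * z i) + z i ^ 2 :=
          fun i => by ring
        simp only [e]
        rw [Finset.sum_add_distrib, Finset.sum_sub_distrib, ← Finset.mul_sum]
      rw [hfe, htr, hexpand, ← hsdef, ← hzdef] at *
      linarith
    have hlow := vec_lower hk1 hk ha hab s z
    have hscale : (1 / a) * ∑ i, (s i - z i) ^ 2
        ≤ (1 / a) * ∑ i, ∑ j, (W i j - Z i j) ^ 2 :=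
      mul_le_mul_of_nonneg_left hfro (by positivity)
    calc (⨅ θ : (boxSet (min d T) a b ((k:ℝ) * (b - a) + (min d T) * a)),
          ∑ i, s i ^ 2 / (θ : Fin (min d T) → ℝ) i)
        ≤ (1 / a) * ∑ i, (s i - z i) ^ 2
          + (1 / (b - a)) * ⨅ φ : (kSet (min d T) (k:ℝ)),
              ∑ i, z i ^ 2 / (φ : Fin (min d T) → ℝ) i := hlow
      _ ≤ _ := by linarith
  constructor
  · -- membership
    obtain ⟨zv, hzanti, hz0, hval⟩ := vec_mem hk1 hk ha hab s hsAnti hs0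
    set Z : Matrix (Fin d) (Fin T) ℝ := U * Emat zv * Vᵀ with hZdef
    have hZsvd : IsSVD Z zv := ⟨hzanti, hz0, U, hU, V, hV, rfl⟩
    have hσZ : σfun Z = zv := svd_unique (hσ Z) hZsvd
    refine ⟨Z, ?_⟩
    have hWZ : W - Z = U * Emat (fun i => s i - zv i) * Vᵀ := by
      rw [hWeq', hZdef, ← Matrix.sub_mul, ← Matrix.mul_sub, Emat_sub]
    have hfro2 : ∑ i, ∑ j, (W i j - Z i j) ^ 2 = ∑ i, (s i - zv i) ^ 2 := by
      have h1 : ∑ i, ∑ j, (W i j - Z i j) ^ 2 = Matrix.trace ((W - Z) * (W - Z)ᵀ) := by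
        rw [frob_eq]
        exact Finset.sum_congr rfl fun i _ => Finset.sum_congr rfl fun j _ => by
          rw [Matrix.sub_apply]
      rw [h1, hWZ]
      exact trace_self _ U hU V hV
    rw [hboxsq, hksq, hσZ, hfro2]
    have hlow := lower Z
    rw [hσZ, hfro2] at hlow
    exact le_antisymm hlow hval
  · -- lower bound
    rintro x ⟨Z, rfl⟩
    rw [hboxsq, hksq]
    exact lower Z
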